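/- For all real v > 0, the identity (2/√π) ∫_0^∞ (√η e^{−η})/(1 + vη) dη = ∫_0^∞ λ e^{−λ} exp(−(v/4)λ²) dλ holds. -/

import Mathlib

open MeasureTheory Real Set

lemma gfii_L1 {a : ℝ} (ha : 0 < a) :
    ∫ l in Set.Ioi (0:ℝ), l * Real.exp (-a * l ^ 2) = (2 * a)⁻¹ := by
  have h := integral_Ioi_of_hasDerivAt_of_tendsto
    (f := fun r : ℝ => -(2 * a)⁻¹ * Real.exp (-a * r ^ 2))
    (f' := fun r : ℝ => r * Real.exp (-a * r ^ 2)) (a := 0) (m := 0)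
    (Continuous.continuousWithinAt (by continuity))
    (fun x hx => by
      have h1 : HasDerivAt (fun r : ℝ => -a * r ^ 2) (-a * (2 * x)) x := by
        simpa [mul_comm] using (hasDerivAt_pow 2 x).const_mul (-a)
      have h2 := (h1.exp).const_mul (-(2 * a)⁻¹)
      convert h2 using 1
      · rfl
      field_simp)
    (integrable_mul_exp_neg_mul_sq ha).integrableOn
    ?_
  · rw [h]; norm_num
  · have h3 : Filter.Tendsto (fun r : ℝ => -a * r ^ 2) Filter.atTop Filter.atBot := by
      apply Filter.Tendsto.const_mul_atTop_of_neg (neg_neg_iff_pos.mpr ha)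
      exact Filter.tendsto_pow_atTop two_ne_zero
    have := (Real.tendsto_exp_atBot.comp h3).const_mul (-(2 * a)⁻¹)
    simpa using this

lemma gfii_phi_image {b : ℝ} (hb : 0 < b) :
    (fun u : ℝ => u - b / u) '' Set.Ioi 0 = Set.univ := by
  ext s
  simp only [Set.mem_image, Set.mem_univ, iff_true, Set.mem_Ioi]
  have hsb : (0:ℝ) ≤ s ^ 2 + 4 * b := by nlinarith
  set r := Real.sqrt (s ^ 2 + 4 * b) with hr
  have hr2 : r ^ 2 = s ^ 2 + 4 * b := Real.sq_sqrt hsb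
  have habs : |s| < r := by
    rw [hr, show |s| = Real.sqrt (s ^ 2) by rw [Real.sqrt_sq_eq_abs]]
    exact Real.sqrt_lt_sqrt (sq_nonneg s) (by linarith)
  have hu : 0 < (s + r) / 2 := by
    have := neg_abs_le s
    linarith
  refine ⟨(s + r) / 2, hu, ?_⟩
  have hne : (s + r) / 2 ≠ 0 := ne_of_gt hu
  have key : b = ((s + r) / 2 - s) * ((s + r) / 2) := by nlinarith [hr2]
  rw [key, mul_div_cancel_right₀ _ hne]
  ring

lemma gfii_inv_image {b : ℝ} (hb : 0 < b) :
    (fun u : ℝ => b / u) '' Set.Ioi 0 = Set.Ioi 0 := by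
  ext w
  simp only [Set.mem_image, Set.mem_Ioi]
  constructor
  · rintro ⟨u, hu, rfl⟩; positivity
  · intro hw
    exact ⟨b / w, by positivity, by field_simp⟩

lemma gfii_phi_deriv {b : ℝ} (u : ℝ) (hu : u ∈ Set.Ioi (0:ℝ)) :
    HasDerivWithinAt (fun u : ℝ => u - b / u) (1 + b / u ^ 2) (Set.Ioi 0) u := by
  have hu0 : u ≠ 0 := ne_of_gt hu
  have h1 : HasDerivAt (fun u : ℝ => u - b * u⁻¹) (1 - b * -(u ^ 2)⁻¹) u :=
    (hasDerivAt_id u).sub ((hasDerivAt_inv hu0).const_mul b)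
  have h2 : HasDerivAt (fun u : ℝ => u - b / u) (1 + b / u ^ 2) u := by
    have he : (fun u : ℝ => u - b / u) = fun u : ℝ => u - b * u⁻¹ := by
      funext x; rw [div_eq_mul_inv]
    rw [he, show 1 + b / u ^ 2 = 1 - b * -(u ^ 2)⁻¹ by rw [mul_neg, sub_neg_eq_add, div_eq_mul_inv]]
    exact h1
  exact h2.hasDerivWithinAt

lemma gfii_inv_deriv {b : ℝ} (u : ℝ) (hu : u ∈ Set.Ioi (0:ℝ)) :
    HasDerivWithinAt (fun u : ℝ => b / u) (-(b / u ^ 2)) (Set.Ioi 0) u := by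
  have hu0 : u ≠ 0 := ne_of_gt hu
  have h1 : HasDerivAt (fun u : ℝ => b * u⁻¹) (b * -(u ^ 2)⁻¹) u :=
    (hasDerivAt_inv hu0).const_mul b
  have h2 : HasDerivAt (fun u : ℝ => b / u) (-(b / u ^ 2)) u := by
    have he : (fun u : ℝ => b / u) = fun u : ℝ => b * u⁻¹ := by
      funext x; rw [div_eq_mul_inv]
    rw [he, show -(b / u ^ 2) = b * -(u ^ 2)⁻¹ by rw [mul_neg, div_eq_mul_inv]]
    exact h1
  exact h2.hasDerivWithinAt

lemma gfii_phi_inj {b : ℝ} (hb : 0 < b) :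
    Set.InjOn (fun u : ℝ => u - b / u) (Set.Ioi 0) := by
  have : StrictMonoOn (fun u : ℝ => u - b / u) (Set.Ioi 0) := by
    intro x hx y hy hxy
    simp only [Set.mem_Ioi] at hx hy
    have : b / y < b / x := div_lt_div_of_pos_left hb hx hxy
    simp only
    linarith
  exact this.injOn

lemma gfii_inv_inj {b : ℝ} (hb : 0 < b) :
    Set.InjOn (fun u : ℝ => b / u) (Set.Ioi 0) := by
  have : StrictAntiOn (fun u : ℝ => b / u) (Set.Ioi 0) := by
    intro x hx y hy hxy
    simp only [Set.mem_Ioi] at hx hy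
    exact div_lt_div_of_pos_left hb hx hxy
  exact this.injOn

lemma gfii_f_meas {b : ℝ} : Measurable fun u : ℝ => Real.exp (-(u - b / u) ^ 2) :=
  (((measurable_id.sub (measurable_const.div measurable_id)).pow_const 2).neg).exp

lemma gfii_f_integrable {b : ℝ} (hb : 0 < b) :
    IntegrableOn (fun u : ℝ => Real.exp (-(u - b / u) ^ 2)) (Set.Ioi 0) := by
  apply Integrable.mono' (g := fun u : ℝ => Real.exp (2 * b) * Real.exp (-1 * u ^ 2))
    (((integrable_exp_neg_mul_sq one_pos).const_mul _).integrableOn)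
  · exact gfii_f_meas.aestronglyMeasurable
  · filter_upwards [ae_restrict_mem measurableSet_Ioi] with u hu
    simp only [Set.mem_Ioi] at hu
    rw [Real.norm_of_nonneg (Real.exp_pos _).le, ← Real.exp_add]
    apply Real.exp_le_exp.mpr
    have hu0 : u ≠ 0 := ne_of_gt hu
    have key : (u - b / u) ^ 2 = u ^ 2 - 2 * b + (b / u) ^ 2 := by
      field_simp; ring
    have h2 : (0:ℝ) ≤ (b / u) ^ 2 := sq_nonneg _
    nlinarith

lemma gfii_glasser {b : ℝ} (hb : 0 < b) :
    ∫ u in Set.Ioi (0:ℝ), Real.exp (-(u - b / u) ^ 2) = Real.sqrt π / 2 := by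
  have hcov := integral_image_eq_integral_abs_deriv_smul measurableSet_Ioi
    (gfii_phi_deriv (b := b)) (gfii_phi_inj hb) (fun s => Real.exp (-s ^ 2))
  rw [gfii_phi_image hb] at hcov
  have htot : ∫ s : ℝ, Real.exp (-s ^ 2) = Real.sqrt π := by
    simpa using integral_gaussian 1
  rw [Measure.restrict_univ] at hcov
  have hptw : ∀ u ∈ Set.Ioi (0:ℝ),
      |(-(b / u ^ 2))| • Real.exp (-(b / u - b / (b / u)) ^ 2)
        = (b / u ^ 2) * Real.exp (-(u - b / u) ^ 2) := by
    intro u hu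
    simp only [Set.mem_Ioi] at hu
    have hu0 : u ≠ 0 := ne_of_gt hu
    have hb0 : b ≠ 0 := ne_of_gt hb
    have h1 : b / (b / u) = u := by field_simp
    have h2 : |(-(b / u ^ 2))| = b / u ^ 2 := by
      rw [abs_neg, abs_of_nonneg (by positivity)]
    rw [smul_eq_mul, h1, h2, show b / u - u = -(u - b / u) by ring, neg_sq]
  have hinv := integral_image_eq_integral_abs_deriv_smul measurableSet_Ioi
    (gfii_inv_deriv (b := b)) (gfii_inv_inj hb)
    (fun w => Real.exp (-(w - b / w) ^ 2))
  rw [gfii_inv_image hb] at hinv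
  have hinv2 : ∫ u in Set.Ioi (0:ℝ), Real.exp (-(u - b / u) ^ 2)
      = ∫ u in Set.Ioi (0:ℝ), (b / u ^ 2) * Real.exp (-(u - b / u) ^ 2) := by
    rw [hinv]
    exact setIntegral_congr_fun measurableSet_Ioi hptw
  have hint2 : IntegrableOn
      (fun u : ℝ => (b / u ^ 2) * Real.exp (-(u - b / u) ^ 2)) (Set.Ioi 0) := by
    have h := (integrableOn_image_iff_integrableOn_abs_deriv_smul measurableSet_Ioi
      (gfii_inv_deriv (b := b)) (gfii_inv_inj hb)
      (fun w => Real.exp (-(w - b / w) ^ 2))).mp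
    rw [gfii_inv_image hb] at h
    exact ((h (gfii_f_integrable hb)).congr_fun hptw measurableSet_Ioi)
  have hsplit : ∫ u in Set.Ioi (0:ℝ), |1 + b / u ^ 2| • Real.exp (-(u - b / u) ^ 2)
      = (∫ u in Set.Ioi (0:ℝ), Real.exp (-(u - b / u) ^ 2))
        + ∫ u in Set.Ioi (0:ℝ), (b / u ^ 2) * Real.exp (-(u - b / u) ^ 2) := by
    rw [← integral_add (gfii_f_integrable hb) hint2]
    apply setIntegral_congr_fun measurableSet_Ioi
    intro u hu
    simp only [Set.mem_Ioi] at hu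
    have habs : |1 + b / u ^ 2| = 1 + b / u ^ 2 := abs_of_pos (by positivity)
    simp only [smul_eq_mul, habs]
    ring
  rw [htot, hsplit, ← hinv2] at hcov
  linarith

lemma gfii_L3 {c : ℝ} (hc : 0 < c) :
    ∫ u in Set.Ioi (0:ℝ), Real.exp (-u ^ 2 - c ^ 2 / u ^ 2)
      = Real.sqrt π / 2 * Real.exp (-(2 * c)) := by
  have h : ∀ u ∈ Set.Ioi (0:ℝ), Real.exp (-u ^ 2 - c ^ 2 / u ^ 2)
      = Real.exp (-(u - c / u) ^ 2) * Real.exp (-(2 * c)) := by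
    intro u hu
    rw [Set.mem_Ioi] at hu
    have hu0 : u ≠ 0 := ne_of_gt hu
    rw [← Real.exp_add]
    congr 1
    field_simp
    ring
  rw [setIntegral_congr_fun measurableSet_Ioi h, integral_mul_const, gfii_glasser hc]

lemma gfii_sq_image : (fun u : ℝ => u ^ 2) '' Set.Ioi 0 = Set.Ioi 0 := by
  ext x
  simp only [Set.mem_image, Set.mem_Ioi]
  constructor
  · rintro ⟨u, hu, rfl⟩; positivity
  · intro hx
    exact ⟨Real.sqrt x, Real.sqrt_pos.mpr hx, Real.sq_sqrt hx.le⟩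

lemma gfii_L4 {l : ℝ} (hl : 0 < l) :
    ∫ η in Set.Ioi (0:ℝ), Real.exp (-η - l ^ 2 / (4 * η)) / Real.sqrt η
      = Real.sqrt π * Real.exp (-l) := by
  have hcov := integral_image_eq_integral_abs_deriv_smul (f := fun u : ℝ => u ^ 2)
    (f' := fun u : ℝ => 2 * u) (s := Set.Ioi (0:ℝ)) measurableSet_Ioi
    (fun u hu => by
      simpa [mul_comm] using (hasDerivAt_pow 2 u).hasDerivWithinAt)
    (fun x hx y hy hxy => by
      simp only [Set.mem_Ioi] at hx hy
      simp only at hxy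
      nlinarith)
    (fun η => Real.exp (-η - l ^ 2 / (4 * η)) / Real.sqrt η)
  rw [gfii_sq_image] at hcov
  rw [hcov]
  have h : ∀ u ∈ Set.Ioi (0:ℝ),
      |2 * u| • (Real.exp (-u ^ 2 - l ^ 2 / (4 * u ^ 2)) / Real.sqrt (u ^ 2))
        = 2 * Real.exp (-u ^ 2 - (l / 2) ^ 2 / u ^ 2) := by
    intro u hu
    rw [Set.mem_Ioi] at hu
    have hu0 : u ≠ 0 := ne_of_gt hu
    rw [smul_eq_mul, abs_of_pos (by positivity), Real.sqrt_sq hu.le,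
      show l ^ 2 / (4 * u ^ 2) = (l / 2) ^ 2 / u ^ 2 by ring]
    field_simp
  rw [setIntegral_congr_fun measurableSet_Ioi h, MeasureTheory.integral_const_mul,
    gfii_L3 (by positivity : (0:ℝ) < l / 2)]
  rw [show 2 * (l / 2) = l by ring]
  ring

set_option maxHeartbeats 1000000 in
theorem gaussian_fraction_integral_identity (v : ℝ) (hv : 0 < v) :
    (2 / Real.sqrt π) *
        ∫ η in Set.Ioi (0 : ℝ), Real.sqrt η * Real.exp (-η) / (1 + v * η)
      = ∫ l in Set.Ioi (0 : ℝ), l * Real.exp (-l) * Real.exp (-(v / 4) * l ^ 2) := by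
  have hπ : (0:ℝ) < Real.sqrt π := Real.sqrt_pos.mpr Real.pi_pos
  set F : ℝ → ℝ → ℝ := fun l η =>
    l * Real.exp (-(v / 4) * l ^ 2) * (Real.exp (-η - l ^ 2 / (4 * η)) / Real.sqrt η) with hF
  have hInt : Integrable (Function.uncurry F)
      ((volume.restrict (Set.Ioi 0)).prod (volume.restrict (Set.Ioi 0))) := by
    have hg1 : Integrable (fun l : ℝ => l * Real.exp (-(v / 4) * l ^ 2))
        (volume.restrict (Set.Ioi 0)) :=
      (integrable_mul_exp_neg_mul_sq (by positivity)).integrableOn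
    have hg2 : Integrable (fun η : ℝ => Real.exp (-η) / Real.sqrt η)
        (volume.restrict (Set.Ioi 0)) := by
      have h := Real.GammaIntegral_convergent (by norm_num : (0:ℝ) < 1 / 2)
      have h2' : Set.EqOn (fun x : ℝ => Real.exp (-x) * x ^ ((1:ℝ) / 2 - 1))
          (fun η : ℝ => Real.exp (-η) / Real.sqrt η) (Set.Ioi 0) := by
        intro x hx
        rw [Set.mem_Ioi] at hx
        show Real.exp (-x) * x ^ ((1:ℝ) / 2 - 1) = Real.exp (-x) / Real.sqrt x
        rw [show (1:ℝ) / 2 - 1 = -(1 / 2) by norm_num, Real.rpow_neg hx.le,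
          ← Real.sqrt_eq_rpow, ← div_eq_mul_inv]
      exact h.congr_fun h2' measurableSet_Ioi
    apply Integrable.mono' (hg1.mul_prod hg2)
    · apply Measurable.aestronglyMeasurable
      apply Measurable.mul
      · exact measurable_fst.mul (((measurable_fst.pow_const 2).const_mul (-(v/4))).exp)
      · exact ((measurable_snd.neg.sub
          ((measurable_fst.pow_const 2).div (measurable_snd.const_mul 4))).exp).div
          (Real.continuous_sqrt.measurable.comp measurable_snd)
    · rw [Measure.prod_restrict]
      filter_upwards [ae_restrict_mem (measurableSet_Ioi.prod measurableSet_Ioi)] with p hp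
      obtain ⟨hp1, hp2⟩ := hp
      rw [Set.mem_Ioi] at hp1 hp2
      have hFval : Function.uncurry F p = p.1 * Real.exp (-(v / 4) * p.1 ^ 2) *
          (Real.exp (-p.2 - p.1 ^ 2 / (4 * p.2)) / Real.sqrt p.2) := rfl
      have hFnn : 0 ≤ Function.uncurry F p := by
        rw [hFval]; positivity
      rw [Real.norm_of_nonneg hFnn, hFval]
      have hle : Real.exp (-p.2 - p.1 ^ 2 / (4 * p.2)) ≤ Real.exp (-p.2) := by
        apply Real.exp_le_exp.mpr
        have : 0 ≤ p.1 ^ 2 / (4 * p.2) := by positivity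
        linarith
      have hs2 : 0 < Real.sqrt p.2 := Real.sqrt_pos.mpr hp2
      exact mul_le_mul_of_nonneg_left
        ((div_le_div_iff_of_pos_right hs2).mpr hle) (by positivity)
  symm
  calc ∫ l in Set.Ioi (0:ℝ), l * Real.exp (-l) * Real.exp (-(v / 4) * l ^ 2)
      = ∫ l in Set.Ioi (0:ℝ), (Real.sqrt π)⁻¹ * ∫ η in Set.Ioi (0:ℝ), F l η := by
        apply setIntegral_congr_fun measurableSet_Ioi
        intro l hl
        rw [Set.mem_Ioi] at hl
        show l * Real.exp (-l) * Real.exp (-(v / 4) * l ^ 2)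
          = (Real.sqrt π)⁻¹ * ∫ η in Set.Ioi (0:ℝ), F l η
        have h1 : ∫ η in Set.Ioi (0:ℝ), F l η
            = l * Real.exp (-(v / 4) * l ^ 2) * (Real.sqrt π * Real.exp (-l)) := by
          rw [hF]
          simp only
          rw [MeasureTheory.integral_const_mul, gfii_L4 hl]
        rw [h1]
        field_simp
    _ = (Real.sqrt π)⁻¹ * ∫ l in Set.Ioi (0:ℝ), ∫ η in Set.Ioi (0:ℝ), F l η :=
        MeasureTheory.integral_const_mul _ _
    _ = (Real.sqrt π)⁻¹ * ∫ η in Set.Ioi (0:ℝ), ∫ l in Set.Ioi (0:ℝ), F l η := by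
        rw [MeasureTheory.integral_integral_swap hInt]
    _ = (Real.sqrt π)⁻¹ * ∫ η in Set.Ioi (0:ℝ),
          2 * (Real.sqrt η * Real.exp (-η) / (1 + v * η)) := by
        congr 1
        apply setIntegral_congr_fun measurableSet_Ioi
        intro η hη
        rw [Set.mem_Ioi] at hη
        show (∫ l in Set.Ioi (0:ℝ), F l η)
          = 2 * (Real.sqrt η * Real.exp (-η) / (1 + v * η))
        have hη0 : η ≠ 0 := ne_of_gt hη
        have ha : (0:ℝ) < v / 4 + 1 / (4 * η) := by positivity
        have hptw : ∀ l : ℝ, F l η = Real.exp (-η) / Real.sqrt η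
            * (l * Real.exp (-(v / 4 + 1 / (4 * η)) * l ^ 2)) := by
          intro l
          have he : Real.exp (-(v / 4) * l ^ 2) * Real.exp (-η - l ^ 2 / (4 * η))
              = Real.exp (-η) * Real.exp (-(v / 4 + 1 / (4 * η)) * l ^ 2) := by
            rw [← Real.exp_add, ← Real.exp_add]
            congr 1
            field_simp
            ring
          rw [hF]
          simp only
          linear_combination (l * (Real.sqrt η)⁻¹) * he
        rw [show (fun l => F l η) = fun l => Real.exp (-η) / Real.sqrt η
            * (l * Real.exp (-(v / 4 + 1 / (4 * η)) * l ^ 2)) from funext hptw]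
        rw [MeasureTheory.integral_const_mul, gfii_L1 ha]
        have hkey : (2 * (v / 4 + 1 / (4 * η)))⁻¹ = 2 * η / (1 + v * η) := by
          have h1 : (1 + v * η) ≠ 0 := by positivity
          field_simp
          ring
        rw [hkey, show Real.exp (-η) / Real.sqrt η * (2 * η / (1 + v * η))
            = 2 * (η / Real.sqrt η * Real.exp (-η) / (1 + v * η)) by ring,
          Real.div_sqrt]
    _ = 2 / Real.sqrt π * ∫ η in Set.Ioi (0:ℝ),
          Real.sqrt η * Real.exp (-η) / (1 + v * η) := by
        rw [MeasureTheory.integral_const_mul]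
        ring
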